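/- The function T₂(n,m) is non-decreasing in n if and only if μ₁ ≥ μ₂; that is, T₂(n+1,m) ≥ T₂(n,m) holds for all n, m ≥ 0 precisely when μ₁ ≥ μ₂, while if μ₁ < μ₂ there exist n, m ≥ 0 with T₂(n+1,m) < T₂(n,m). -/

import Mathlib

/-- The function `T₂(n,m)` is non-decreasing in `n` if and only if `μ₁ ≥ μ₂`. -/
theorem stmt_4 (μ₁ μ₂ : ℝ) (hμ₁ : 0 < μ₁) (hμ₂ : 0 < μ₂)
    (T : ℕ × ℕ → ℝ)
    (hT0 : ∀ m : ℕ, T (0, m) = m / μ₂)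
    (hTb : ∀ n : ℕ, T (n + 1, 0) = 1 / μ₁ + T (n, 1))
    (hTrec : ∀ n m : ℕ, T (n + 1, m + 1) =
      1 / (μ₁ + μ₂) + μ₁ / (μ₁ + μ₂) * T (n, m + 2) + μ₂ / (μ₁ + μ₂) * T (n + 1, m))
    (T₂ : ℕ → ℕ → ℝ)
    (hT₂ : ∀ n m : ℕ, T₂ n m = T (n, m) - n / μ₁) :
    ((∀ n m : ℕ, T₂ (n + 1) m ≥ T₂ n m) ↔ μ₁ ≥ μ₂) ∧
    (μ₁ < μ₂ → ∃ n m : ℕ, T₂ (n + 1) m < T₂ n m) := by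
  have hs : 0 < μ₁ + μ₂ := by linarith
  have hr0 : 0 ≤ μ₂ / (μ₁ + μ₂) := by positivity
  have hr1 : μ₂ / (μ₁ + μ₂) < 1 := by
    rw [div_lt_one hs]; linarith
  -- explicit formula for the first difference
  have hA : ∀ m : ℕ, T (1, m) - T (0, m) = 1/μ₂ + (1/μ₁) * (μ₂/(μ₁+μ₂))^m := by
    intro m
    induction m with
    | zero =>
      have h1 := hTb 0
      have h2 := hT0 0
      have h3 := hT0 1
      rw [h1, h2, h3]
      push_cast
      field_simp
      ring
    | succ m ih =>
      have h1 := hTrec 0 m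
      have h2 := hT0 (m+2)
      have h3 := hT0 (m+1)
      have h4 := hT0 m
      have hTm : T (1, m) = (m : ℝ)/μ₂ + (1/μ₂ + (1/μ₁) * (μ₂/(μ₁+μ₂))^m) := by
        have := ih; rw [h4] at this; linarith
      rw [h1, h2, h3, hTm]
      push_cast
      rw [pow_succ]
      generalize (μ₂/(μ₁+μ₂))^m = x
      field_simp
      ring
  -- boundary relation for differences
  have hB : ∀ n : ℕ, T (n+2, 0) - T (n+1, 0) = T (n+1, 1) - T (n, 1) := by
    intro n
    have h1 := hTb (n+1)
    have h2 := hTb n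
    rw [h1, h2]; ring
  -- recursion for differences
  have hC : ∀ n m : ℕ, T (n+2, m+1) - T (n+1, m+1) =
      μ₁/(μ₁+μ₂) * (T (n+1, m+2) - T (n, m+2)) +
      μ₂/(μ₁+μ₂) * (T (n+2, m) - T (n+1, m)) := by
    intro n m
    have h1 := hTrec (n+1) m
    have h2 := hTrec n m
    rw [h1, h2]; ring
  -- main monotonicity: if μ₂ ≤ μ₁ then all differences ≥ 1/μ₁
  have hmain : μ₂ ≤ μ₁ → ∀ n m : ℕ, T (n+1, m) - T (n, m) ≥ 1/μ₁ := by
    intro hle n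
    induction n with
    | zero =>
      intro m
      rw [hA m]
      have h1 : 1/μ₁ ≤ 1/μ₂ := one_div_le_one_div_of_le hμ₂ hle
      have h2 : 0 ≤ (1/μ₁) * (μ₂/(μ₁+μ₂))^m := by positivity
      linarith
    | succ n ih =>
      intro m
      induction m with
      | zero =>
        have := ih 1
        have hb := hB n
        linarith
      | succ m ihm =>
        have key := hC n m
        have e1 := ih (m+2)
        have p1 : (0:ℝ) ≤ μ₁/(μ₁+μ₂) := by positivity
        have p2 : (0:ℝ) ≤ μ₂/(μ₁+μ₂) := by positivity
        have h1 : μ₁/(μ₁+μ₂) * (1/μ₁) ≤ μ₁/(μ₁+μ₂) * (T (n+1, m+2) - T (n, m+2)) :=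
          mul_le_mul_of_nonneg_left e1 p1
        have h2 : μ₂/(μ₁+μ₂) * (1/μ₁) ≤ μ₂/(μ₁+μ₂) * (T (n+2, m) - T (n+1, m)) :=
          mul_le_mul_of_nonneg_left ihm p2
        have hsum : μ₁/(μ₁+μ₂) * (1/μ₁) + μ₂/(μ₁+μ₂) * (1/μ₁) = 1/μ₁ := by
          field_simp
        linarith
  -- counterexample when μ₁ < μ₂
  have hcex : μ₁ < μ₂ → ∃ n m : ℕ, T₂ (n + 1) m < T₂ n m := by
    intro hlt
    have hε : 0 < (μ₂ - μ₁)/μ₂ := div_pos (by linarith) hμ₂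
    obtain ⟨m, hm⟩ := exists_pow_lt_of_lt_one hε hr1
    refine ⟨0, m, ?_⟩
    rw [hT₂ 1 m, hT₂ 0 m]
    have hAm := hA m
    have hlt2 : (1/μ₁) * (μ₂/(μ₁+μ₂))^m < (μ₂ - μ₁)/(μ₁*μ₂) := by
      have : (1/μ₁) * ((μ₂/(μ₁+μ₂))^m) < (1/μ₁) * ((μ₂ - μ₁)/μ₂) :=
        mul_lt_mul_of_pos_left hm (by positivity)
      calc (1/μ₁) * (μ₂/(μ₁+μ₂))^m < (1/μ₁) * ((μ₂ - μ₁)/μ₂) := this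
        _ = (μ₂ - μ₁)/(μ₁*μ₂) := by field_simp
    have heq : 1/μ₁ - 1/μ₂ = (μ₂ - μ₁)/(μ₁*μ₂) := by field_simp
    push_cast
    have : T (1, m) - T (0, m) < 1/μ₁ := by
      rw [hAm]; linarith
    have h0 : (0:ℝ)/μ₁ = 0 := zero_div _
    linarith
  constructor
  · constructor
    · intro hmono
      by_contra hnot
      push_neg at hnot
      obtain ⟨n, m, hnm⟩ := hcex hnot
      exact absurd (hmono n m) (not_le.mpr hnm)
    · intro hge n m
      rw [hT₂ (n+1) m, hT₂ n m]
      have := hmain hge n m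
      push_cast
      have hdiv : ((n:ℝ)+1)/μ₁ - (n:ℝ)/μ₁ = 1/μ₁ := by field_simp; ring
      linarith
  · exact hcex
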